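/- Let f : ℝ → ℝ be differentiable and satisfy f(x+1) = f(x) + d for all x ∈ ℝ, where d is an integer. If there exists y ∈ ℝ such that the fiber {x ∈ [0,1) : f(x) − y ∈ ℤ} is infinite or has cardinality different from |d|, then there exists x ∈ ℝ with deriv f x = 0. -/

import Mathlib

open Set

/-- Auxiliary: for a continuous strictly monotone `f` with `f (x+1) = f x + d`,
the fiber over `y` in `[0,1)` has exactly `d.natAbs` points. -/
lemma aux_fiber_card (f : ℝ → ℝ) (hc : Continuous f) (hm : StrictMono f)
    (d : ℤ) (hper : ∀ x, f (x + 1) = f x + d) (y : ℝ) :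
    ({x | x ∈ Set.Ico (0 : ℝ) 1 ∧ ∃ k : ℤ, f x - y = k}).Finite ∧
    Nat.card {x | x ∈ Set.Ico (0 : ℝ) 1 ∧ ∃ k : ℤ, f x - y = k} = d.natAbs := by
  set S : Set ℝ := {x | x ∈ Set.Ico (0 : ℝ) 1 ∧ ∃ k : ℤ, f x - y = k} with hS
  have hf1 : f 1 = f 0 + d := by simpa using hper 0
  have hdpos : (0 : ℤ) < d := by
    have : f 0 < f 1 := hm one_pos
    rw [hf1] at this
    have h0 : (0:ℝ) < (d:ℝ) := by linarith
    exact_mod_cast h0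
  set m : ℤ := ⌈f 0 - y⌉ with hmdef
  set T : Set ℤ := Set.Ico m (m + d) with hT
  have hTmem : ∀ k : ℤ, k ∈ T ↔ f 0 ≤ y + k ∧ y + k < f 0 + d := by
    intro k
    constructor
    · rintro ⟨h1, h2⟩
      have h1' : f 0 - y ≤ (k : ℝ) := le_trans (Int.le_ceil _) (by exact_mod_cast h1)
      have h2' : ((k - d : ℤ) : ℝ) < f 0 - y := Int.lt_ceil.mp (by omega)
      push_cast at h2'
      constructor <;> linarith
    · rintro ⟨h1, h2⟩
      constructor
      · rw [hmdef, Int.ceil_le]; linarith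
      · have h3 : k - d < ⌈f 0 - y⌉ := Int.lt_ceil.mpr (by push_cast; linarith)
        omega
  have hbij : Set.BijOn (fun x => (⌊f x - y⌋ : ℤ)) S T := by
    refine ⟨?_, ?_, ?_⟩
    · rintro x ⟨⟨hx0, hx1⟩, k, hk⟩
      have hk' : ⌊f x - y⌋ = k := by rw [hk]; exact Int.floor_intCast k
      show ⌊f x - y⌋ ∈ T
      rw [hk', hTmem]
      have h1 : f 0 ≤ f x := hm.le_iff_le.2 hx0
      have h2 : f x < f 1 := hm hx1
      rw [hf1] at h2
      have : y + (k : ℝ) = f x := by linarith [hk]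
      constructor <;> linarith
    · rintro x1 ⟨_, k1, hk1⟩ x2 ⟨_, k2, hk2⟩ he
      simp only [hk1, hk2, Int.floor_intCast] at he
      subst he
      have : f x1 = f x2 := by linarith
      exact hm.injective this
    · rintro k hk
      rw [hTmem] at hk
      have hsub : Set.Ico (f 0) (f 1) ⊆ f '' Set.Ico 0 1 :=
        intermediate_value_Ico zero_le_one hc.continuousOn
      have : y + (k : ℝ) ∈ Set.Ico (f 0) (f 1) := by rw [hf1]; exact hk
      obtain ⟨x, hx, hfx⟩ := hsub this
      refine ⟨x, ⟨hx, k, by linarith⟩, ?_⟩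
      simp only
      rw [show f x - y = (k : ℝ) by linarith, Int.floor_intCast]
  have hTfin : T.Finite := Set.finite_Ico m (m + d)
  have hSfin : S.Finite := Set.Finite.of_finite_image (hbij.image_eq ▸ hTfin) hbij.injOn
  have hcardT : Nat.card T = d.natAbs := by
    rw [hT, Nat.card_coe_set_eq, ← Finset.coe_Ico, Set.ncard_coe_finset, Int.card_Ico]
    omega
  refine ⟨hSfin, ?_⟩
  rw [Nat.card_congr hbij.equiv, hcardT]

theorem exists_deriv_zero_of_bad_fiber (f : ℝ → ℝ)
    (hf : Differentiable ℝ f) (d : ℤ) (hper : ∀ x, f (x + 1) = f x + d)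
    (h : ∃ y : ℝ,
      ¬ {x | x ∈ Set.Ico (0 : ℝ) 1 ∧ ∃ k : ℤ, f x - y = k}.Finite ∨
      Nat.card {x | x ∈ Set.Ico (0 : ℝ) 1 ∧ ∃ k : ℤ, f x - y = k} ≠ d.natAbs) :
    ∃ x : ℝ, deriv f x = 0 := by
  by_contra hz
  push_neg at hz
  obtain ⟨y, hy⟩ := h
  -- the derivative has constant sign by Darboux
  have darboux : (∀ x, 0 < deriv f x) ∨ (∀ x, deriv f x < 0) := by
    by_contra hc
    push_neg at hc
    obtain ⟨⟨a, ha⟩, ⟨b, hb⟩⟩ := hc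
    have ha' : deriv f a < 0 := lt_of_le_of_ne ha (hz a)
    have hb' : 0 < deriv f b := lt_of_le_of_ne (hb) (Ne.symm (hz b))
    rcases le_total a b with hab | hab
    · obtain ⟨c, _, hc0⟩ := exists_hasDerivWithinAt_eq_of_gt_of_lt hab
        (fun x _ => (hf x).hasDerivAt.hasDerivWithinAt) ha' hb'
      exact hz c hc0
    · obtain ⟨c, _, hc0⟩ := exists_hasDerivWithinAt_eq_of_lt_of_gt hab
        (fun x _ => (hf x).hasDerivAt.hasDerivWithinAt) hb' ha'
      exact hz c hc0
  rcases darboux with hpos | hneg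
  · have hm : StrictMono f := strictMono_of_deriv_pos hpos
    obtain ⟨h1, h2⟩ := aux_fiber_card f hf.continuous hm d hper y
    tauto
  · have hm : StrictMono (fun x => -f x) :=
      strictMono_of_deriv_pos (fun x => by
        rw [deriv.fun_neg]; linarith [hneg x])
    have hper' : ∀ x, -f (x + 1) = -f x + ((-d : ℤ) : ℝ) := by
      intro x; push_cast; rw [hper x]; ring
    obtain ⟨h1, h2⟩ := aux_fiber_card (fun x => -f x) hf.continuous.neg hm (-d) hper' (-y)
    have hset : {x | x ∈ Set.Ico (0 : ℝ) 1 ∧ ∃ k : ℤ, -f x - -y = k} =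
        {x | x ∈ Set.Ico (0 : ℝ) 1 ∧ ∃ k : ℤ, f x - y = k} := by
      ext x
      simp only [Set.mem_setOf_eq, and_congr_right_iff]
      intro _
      constructor
      · rintro ⟨k, hk⟩; exact ⟨-k, by push_cast; linarith⟩
      · rintro ⟨k, hk⟩; exact ⟨-k, by push_cast; linarith⟩
    rw [hset] at h1 h2
    rw [Int.natAbs_neg] at h2
    tauto
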